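/- Let s solve (γ₁/2)(τ+s)² + γ₀(τ+s) = exp(a₁(x₁−x₂))(γ₀τ + γ₁τ²/2) with −τ < s < 0, and regard s as an implicit function of γ₀ (with γ₁, a₁, τ, x₁, x₂ fixed, all parameters positive, x₁ < x₂). Then ∂s/∂γ₀ = (γ₁/2)·(τ+s)·s / (k₂(τ)·k₁(τ+s)), where k₁(t) = γ₁t + γ₀ and k₂(t) = (γ₁/2)t + γ₀. -/

import Mathlib

theorem stmt_9 (γ₀ γ₁ a₁ τ x₁ x₂ : ℝ) (s : ℝ → ℝ) (s' : ℝ)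
    (hγ₀ : 0 < γ₀) (hγ₁ : 0 < γ₁) (ha₁ : 0 < a₁) (hτ : 0 < τ) (hx : x₁ < x₂)
    (heq : ∀ g₀ : ℝ, 0 < g₀ →
      γ₁ / 2 * (τ + s g₀) ^ 2 + g₀ * (τ + s g₀)
        = Real.exp (a₁ * (x₁ - x₂)) * (g₀ * τ + γ₁ * τ ^ 2 / 2))
    (hrange : ∀ g₀ : ℝ, 0 < g₀ → -τ < s g₀ ∧ s g₀ < 0)
    (hderiv : HasDerivAt s s' γ₀) :
    s' = γ₁ / 2 * (τ + s γ₀) * s γ₀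
        / ((γ₁ / 2 * τ + γ₀) * (γ₁ * (τ + s γ₀) + γ₀)) := by
  set E := Real.exp (a₁ * (x₁ - x₂)) with hE
  have hs := hrange γ₀ hγ₀
  have hts : 0 < τ + s γ₀ := by linarith [hs.1]
  have hden1 : (0:ℝ) < γ₁ / 2 * τ + γ₀ := by positivity
  have hden2 : (0:ℝ) < γ₁ * (τ + s γ₀) + γ₀ := by positivity
  have h1 : HasDerivAt (fun g => τ + s g) s' γ₀ := by
    exact hderiv.const_add τ
  have hF : HasDerivAt (fun g => γ₁ / 2 * (τ + s g) ^ 2 + g * (τ + s g)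
        - E * (g * τ + γ₁ * τ ^ 2 / 2))
      (γ₁ / 2 * (2 * (τ + s γ₀) ^ 1 * s') + (1 * (τ + s γ₀) + γ₀ * s') - E * (1 * τ + 0)) γ₀ := by
    exact (((h1.pow 2).const_mul (γ₁/2)).add ((hasDerivAt_id γ₀).mul h1)).sub
      ((((hasDerivAt_id γ₀).mul_const τ).add (hasDerivAt_const _ _)).const_mul E)
  have hmem : Set.Ioi (0:ℝ) ∈ nhds γ₀ := isOpen_Ioi.mem_nhds hγ₀
  have hzero : HasDerivAt (fun g => γ₁ / 2 * (τ + s g) ^ 2 + g * (τ + s g)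
        - E * (g * τ + γ₁ * τ ^ 2 / 2)) 0 γ₀ := by
    have hev : (fun g => γ₁ / 2 * (τ + s g) ^ 2 + g * (τ + s g)
        - E * (g * τ + γ₁ * τ ^ 2 / 2)) =ᶠ[nhds γ₀] (fun _ => (0:ℝ)) := by
      filter_upwards [hmem] with g hg
      have := heq g hg
      simp only [Set.mem_Ioi] at hg
      linarith [heq g hg]
    exact (hasDerivAt_const γ₀ (0:ℝ)).congr_of_eventuallyEq hev
  have hD : γ₁ / 2 * (2 * (τ + s γ₀) ^ 1 * s') + (1 * (τ + s γ₀) + γ₀ * s') - E * (1 * τ + 0) = 0 :=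
    hF.unique hzero
  have hkey := heq γ₀ hγ₀
  rw [eq_div_iff (by positivity)]
  linear_combination (γ₁ / 2 * τ + γ₀) * hD - hkey
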